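/- For all n ≥ 0, d^e_2(n) − d^o_2(n) equals (−1)^m if n = m(3m+1)/2 for some integer m, and 0 otherwise. -/

import Mathlib

/-- Number of overpartitions of `n` wherein only even parts may be overlined
with an even total number of parts. -/
def d2e (n : ℕ) : ℕ :=
  ∑ m ∈ Finset.range (n + 1),
    Fintype.card {p : Nat.Partition m × Nat.Partition (n - m) //
      p.2.parts.Nodup ∧ (∀ x ∈ p.2.parts, Even x) ∧
        Even (Multiset.card p.1.parts + Multiset.card p.2.parts)}

/-- Number of overpartitions of `n` wherein only even parts may be overlined
with an odd total number of parts. -/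
def d2o (n : ℕ) : ℕ :=
  ∑ m ∈ Finset.range (n + 1),
    Fintype.card {p : Nat.Partition m × Nat.Partition (n - m) //
      p.2.parts.Nodup ∧ (∀ x ∈ p.2.parts, Even x) ∧
        Odd (Multiset.card p.1.parts + Multiset.card p.2.parts)}


namespace Pent

/-- entry at index `i`, `0` out of range. -/
def D (l : List ℕ) (i : ℕ) : ℕ := l.getD i 0

@[simp] lemma D_nil (i : ℕ) : D [] i = 0 := by cases i <;> rfl
@[simp] lemma D_cons_zero (x : ℕ) (xs : List ℕ) : D (x :: xs) 0 = x := rfl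
@[simp] lemma D_cons_succ (x : ℕ) (xs : List ℕ) (i : ℕ) : D (x :: xs) (i+1) = D xs i := rfl

lemma D_eq_getElem (l : List ℕ) {i : ℕ} (h : i < l.length) : D l i = l[i] :=
  List.getD_eq_getElem l 0 h

lemma D_eq_zero (l : List ℕ) {i : ℕ} (h : l.length ≤ i) : D l i = 0 :=
  List.getD_eq_default l 0 h

/-- strictly decreasing list of positive naturals. -/
def Good (l : List ℕ) : Prop := l.Pairwise (· > ·) ∧ ∀ x ∈ l, 0 < x

lemma good_D_lt {l : List ℕ} (h : Good l) {i j : ℕ} (hij : i < j) (hj : j < l.length) :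
    D l j < D l i := by
  have := List.pairwise_iff_getElem.1 h.1 i j (hij.trans hj) hj hij
  rwa [D_eq_getElem _ (hij.trans hj), D_eq_getElem _ hj]

lemma good_D_le {l : List ℕ} (h : Good l) {i j : ℕ} (hij : i ≤ j) (hj : j < l.length) :
    D l j ≤ D l i := by
  rcases eq_or_lt_of_le hij with rfl | hlt
  · exact le_rfl
  · exact (good_D_lt h hlt hj).le

lemma good_D_pos {l : List ℕ} (h : Good l) {i : ℕ} (hi : i < l.length) : 0 < D l i := by
  rw [D_eq_getElem _ hi]
  exact h.2 _ (List.getElem_mem _)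

lemma good_of_D {l : List ℕ}
    (h1 : ∀ i j, i < j → j < l.length → D l j < D l i)
    (h2 : ∀ i, i < l.length → 0 < D l i) : Good l := by
  constructor
  · exact List.pairwise_iff_getElem.2 fun i j hi hj hij => by
      have := h1 i j hij hj
      rwa [D_eq_getElem _ hi, D_eq_getElem _ hj] at this
  · intro x hx
    obtain ⟨i, hi, rfl⟩ := List.mem_iff_getElem.1 hx
    have := h2 i hi
    rwa [D_eq_getElem _ hi] at this

def addTo : ℕ → List ℕ → List ℕ
  | 0, l => l
  | _+1, [] => []
  | n+1, x :: xs => (x + 1) :: addTo n xs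

def subTo : ℕ → List ℕ → List ℕ
  | 0, l => l
  | _+1, [] => []
  | n+1, x :: xs => (x - 1) :: subTo n xs

@[simp] lemma addTo_zero (l : List ℕ) : addTo 0 l = l := rfl
@[simp] lemma subTo_zero (l : List ℕ) : subTo 0 l = l := rfl

@[simp] lemma addTo_length : ∀ (n : ℕ) (l : List ℕ), (addTo n l).length = l.length
  | 0, _ => rfl
  | _+1, [] => rfl
  | n+1, x :: xs => by simp [addTo, addTo_length n xs]

@[simp] lemma subTo_length : ∀ (n : ℕ) (l : List ℕ), (subTo n l).length = l.length
  | 0, _ => rfl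
  | _+1, [] => rfl
  | n+1, x :: xs => by simp [subTo, subTo_length n xs]

lemma addTo_sum : ∀ (n : ℕ) (l : List ℕ), n ≤ l.length → (addTo n l).sum = l.sum + n
  | 0, l, _ => by simp
  | n+1, [], h => by simp at h
  | n+1, x :: xs, h => by
    have := addTo_sum n xs (by simpa using h)
    simp [addTo, this]; omega

lemma subTo_sum : ∀ (n : ℕ) (l : List ℕ), n ≤ l.length → (∀ i, i < n → 0 < D l i) →
    (subTo n l).sum + n = l.sum
  | 0, l, _, _ => by simp
  | n+1, [], h, _ => by simp at h
  | n+1, x :: xs, h, hp => by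
    have := subTo_sum n xs (by simpa using h) (fun i hi => hp (i+1) (by omega))
    have hx : 0 < x := hp 0 (by omega)
    simp [subTo]; omega

lemma D_addTo_lt : ∀ (n : ℕ) (l : List ℕ) (i : ℕ), i < n → i < l.length →
    D (addTo n l) i = D l i + 1
  | 0, _, _, h, _ => by omega
  | _+1, [], _, _, h => by simp at h
  | n+1, x :: xs, 0, _, _ => rfl
  | n+1, x :: xs, i+1, h1, h2 =>
    D_addTo_lt n xs i (by omega) (by simpa using h2)

lemma D_addTo_ge : ∀ (n : ℕ) (l : List ℕ) (i : ℕ), n ≤ i → D (addTo n l) i = D l i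
  | 0, _, _, _ => rfl
  | _+1, [], _, _ => by simp [addTo]
  | _+1, _ :: _, 0, h => by omega
  | n+1, x :: xs, i+1, h => D_addTo_ge n xs i (by omega)

lemma D_subTo_lt : ∀ (n : ℕ) (l : List ℕ) (i : ℕ), i < n → i < l.length →
    D (subTo n l) i = D l i - 1
  | 0, _, _, h, _ => by omega
  | _+1, [], _, _, h => by simp at h
  | n+1, x :: xs, 0, _, _ => rfl
  | n+1, x :: xs, i+1, h1, h2 =>
    D_subTo_lt n xs i (by omega) (by simpa using h2)

lemma D_subTo_ge : ∀ (n : ℕ) (l : List ℕ) (i : ℕ), n ≤ i → D (subTo n l) i = D l i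
  | 0, _, _, _ => rfl
  | _+1, [], _, _ => by simp [subTo]
  | _+1, _ :: _, 0, h => by omega
  | n+1, x :: xs, i+1, h => D_subTo_ge n xs i (by omega)

lemma subTo_addTo : ∀ (n : ℕ) (l : List ℕ), subTo n (addTo n l) = l
  | 0, _ => rfl
  | _+1, [] => rfl
  | n+1, x :: xs => by simp [addTo, subTo, subTo_addTo n xs]

lemma addTo_subTo : ∀ (n : ℕ) (l : List ℕ), (∀ i, i < n → 0 < D l i) →
    addTo n (subTo n l) = l
  | 0, _, _ => rfl
  | _+1, [], _ => rfl
  | n+1, x :: xs, h => by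
    have hx : 0 < x := h 0 (by omega)
    have := addTo_subTo n xs (fun i hi => h (i+1) (by omega))
    simp [addTo, subTo, this]; omega

def stair : ℕ → List ℕ → ℕ
  | _, [] => 0
  | a, x :: xs => if x = a then stair (a-1) xs + 1 else 0

lemma stair_le : ∀ (a : ℕ) (l : List ℕ), stair a l ≤ l.length
  | _, [] => le_rfl
  | a, x :: xs => by
    simp only [stair]
    split
    · simpa using stair_le (a-1) xs
    · simp

lemma stair_D : ∀ (a : ℕ) (l : List ℕ) (i : ℕ), i < stair a l → D l i = a - i
  | _, [], _, h => by simp [stair] at h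
  | a, x :: xs, i, h => by
    simp only [stair] at h
    split at h
    · rename_i hx
      cases i with
      | zero => simpa using hx
      | succ i =>
        have := stair_D (a-1) xs i (by omega)
        simp only [D_cons_succ]
        omega
    · omega

lemma stair_max : ∀ (a : ℕ) (l : List ℕ), stair a l < l.length →
    D l (stair a l) ≠ a - stair a l
  | _, [], h => by simp at h
  | a, x :: xs, h => by
    by_cases hx : x = a
    · simp only [stair, if_pos hx] at h ⊢
      have := stair_max (a-1) xs (by simpa using h)
      simp only [D_cons_succ]
      omega
    · simp only [stair, if_neg hx] at h ⊢
      simpa using hx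

lemma stair_intro : ∀ (a : ℕ) (l : List ℕ) (m : ℕ), m ≤ l.length →
    (∀ i, i < m → D l i = a - i) → (∀ i, i < m → i < a) → m ≤ stair a l
  | _, [], m, hm, _, _ => by
    simp only [List.length_nil, Nat.le_zero] at hm
    simp [stair, hm]
  | a, x :: xs, 0, _, _, _ => by omega
  | a, x :: xs, m+1, hm, hD, ha => by
    have hx : x = a := by have := hD 0 (by omega); simpa using this
    simp only [stair, if_pos hx]
    have : m ≤ stair (a-1) xs := by
      refine stair_intro (a-1) xs m (by simpa using hm) (fun i hi => ?_) (fun i hi => ?_)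
      · have := hD (i+1) (by omega)
        have := ha (i+1) (by omega)
        simp only [D_cons_succ] at *
        omega
      · have := ha (i+1) (by omega); omega
    omega

def st (l : List ℕ) : ℕ := stair (D l 0) l

lemma st_le (l : List ℕ) : st l ≤ l.length := stair_le _ _

lemma st_pos {l : List ℕ} (h : l ≠ []) : 0 < st l := by
  cases l with
  | nil => simp at h
  | cons x xs => simp [st, stair]

lemma st_D {l : List ℕ} {i : ℕ} (h : i < st l) : D l i = D l 0 - i := stair_D _ _ _ h

lemma st_max {l : List ℕ} (h : st l < l.length) : D l (st l) ≠ D l 0 - st l := stair_max _ _ h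

lemma st_intro {l : List ℕ} {m : ℕ} (hm : m ≤ l.length)
    (hD : ∀ i, i < m → D l i = D l 0 - i) (ha : ∀ i, i < m → i < D l 0) : m ≤ st l :=
  stair_intro _ _ _ hm hD ha

/-- last entry (0 for nil) -/
def last (l : List ℕ) : ℕ := D l (l.length - 1)

lemma dropLast_append_last {l : List ℕ} (h : l ≠ []) : l.dropLast ++ [last l] = l := by
  have hlt : l.length - 1 < l.length := Nat.sub_lt (List.length_pos_iff.2 h) one_pos
  have h2 := List.dropLast_append_getLast h
  rw [List.getLast_eq_getElem, ← D_eq_getElem _ hlt] at h2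
  exact h2

lemma D_dropLast {l : List ℕ} {i : ℕ} (h : i < l.length - 1) : D l.dropLast i = D l i := by
  rw [D_eq_getElem _ (by simpa using h), D_eq_getElem _ (by omega),
    List.getElem_dropLast]

lemma sum_eq_dropLast {l : List ℕ} (h : l ≠ []) : l.sum = l.dropLast.sum + last l := by
  conv_lhs => rw [← dropLast_append_last h]
  simp

def franklin (l : List ℕ) : List ℕ :=
  if last l ≤ st l then (if last l = l.length then l else addTo (last l) l.dropLast)
  else (if st l = l.length ∧ last l = st l + 1 then l else subTo (st l) l ++ [st l])



lemma last_def (l : List ℕ) : last l = D l (l.length - 1) := rfl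

lemma D_append_lt {u v : List ℕ} {i : ℕ} (h : i < u.length) : D (u ++ v) i = D u i := by
  rw [D_eq_getElem _ (by simp; omega), D_eq_getElem _ h, List.getElem_append_left]

lemma D_concat_last {u : List ℕ} {x : ℕ} : D (u ++ [x]) u.length = x := by
  rw [D_eq_getElem _ (by simp)]
  simp

theorem caseA {l : List ℕ} (hG : Good l) (hne : l ≠ []) (hst : last l ≤ st l)
    (hlen : last l ≠ l.length) :
    Good (addTo (last l) l.dropLast) ∧
    (addTo (last l) l.dropLast).length + 1 = l.length ∧
    (addTo (last l) l.dropLast).sum = l.sum ∧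
    franklin (addTo (last l) l.dropLast) = l := by
  set k := l.length with hk
  set s := last l with hs
  set l' := addTo s l.dropLast with hl'
  have hk0 : 0 < k := by rw [hk]; exact List.length_pos_iff.2 hne
  have hstle : st l ≤ k := by rw [hk]; exact st_le l
  have hsk : s < k := lt_of_le_of_ne (hst.trans hstle) hlen
  have hsD : s = D l (k-1) := by rw [hs, hk]; rfl
  have hs0 : 0 < s := by rw [hsD]; exact good_D_pos hG (by omega)
  have hk2 : 2 ≤ k := by omega
  have len' : l'.length = k - 1 := by simp [hl', hk]
  have hD1 : ∀ i, i < s → D l' i = D l i + 1 := by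
    intro i hi
    rw [hl', D_addTo_lt _ _ _ hi (by simp [hk]; omega), D_dropLast (by omega)]
  have hD2 : ∀ i, s ≤ i → i < k - 1 → D l' i = D l i := by
    intro i h1 h2
    rw [hl', D_addTo_ge _ _ _ h1, D_dropLast (by omega)]
  have hstD : ∀ i, i < s → D l i = D l 0 - i := fun i hi => st_D (by omega)
  have hbound : ∀ i, i < s → i < D l 0 := by
    intro i hi
    have h1 := hstD i hi
    have h2 := good_D_pos hG (show i < l.length by omega)
    omega
  have hGD : ∀ i j, i < j → j < l'.length → D l' j < D l' i := by
    intro i j hij hj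
    rw [len'] at hj
    have hlt : D l j < D l i := good_D_lt hG hij (by omega)
    rcases lt_or_ge j s with h | h
    · rw [hD1 i (by omega), hD1 j h]; omega
    · rcases lt_or_ge i s with h2 | h2
      · rw [hD1 i h2, hD2 j h hj]; omega
      · rw [hD2 i h2 (by omega), hD2 j h hj]; omega
  have hGP : ∀ i, i < l'.length → 0 < D l' i := by
    intro i hi
    rw [len'] at hi
    have := good_D_pos hG (show i < l.length by omega)
    rcases lt_or_ge i s with h | h
    · rw [hD1 i h]; omega
    · rw [hD2 i h hi]; omega
  have hG' : Good l' := good_of_D hGD hGP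
  have hsum : l'.sum = l.sum := by
    rw [hl', addTo_sum _ _ (by simp [hk]; omega), sum_eq_dropLast hne]
  have hD'0 : D l' 0 = D l 0 + 1 := hD1 0 hs0
  have hst' : st l' = s := by
    have hge : s ≤ st l' := by
      refine st_intro (by omega) (fun i hi => ?_) (fun i hi => ?_)
      · rw [hD1 i hi, hD'0, hstD i hi]
        have := hbound i hi; omega
      · rw [hD'0]; have := hbound i hi; omega
    by_contra hcon
    have hlt2 : s < st l' := by omega
    have hsl : st l' ≤ k - 1 := by rw [← len']; exact st_le l'
    have hDs : D l' s = D l' 0 - s := st_D hlt2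
    have hs1 : D l (s-1) = D l 0 - (s-1) := hstD (s-1) (by omega)
    have hlt3 : D l s < D l (s-1) := good_D_lt hG (by omega) (by omega)
    have hposs : 0 < D l (s-1) := good_D_pos hG (by omega)
    have hDs2 : D l' s = D l s := hD2 s le_rfl (by omega)
    rw [hDs2, hD'0] at hDs
    omega
  have hlast' : last l' = D l' (k-2) := by
    rw [last_def, len']
    congr 1
  have hD2k : D l (k-1) < D l (k-2) := good_D_lt hG (by omega) (by omega)
  have hlastbig : st l' < last l' := by
    rw [hst', hlast']
    rcases lt_or_ge (k-2) s with h | h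
    · rw [hD1 _ h]; omega
    · rw [hD2 _ h (by omega)]; omega
  have hfr : franklin l' = l := by
    rw [franklin, if_neg (by omega)]
    rw [if_neg ?hexc]
    case hexc =>
      rintro ⟨h1, h2⟩
      rw [hst', len'] at h1
      rw [hlast', hD1 (k-2) (by omega), hst'] at h2
      omega
    rw [hst', hl', subTo_addTo, hs, dropLast_append_last hne]
  exact ⟨hG', by omega, hsum, hfr⟩

theorem caseB {l : List ℕ} (hG : Good l) (hne : l ≠ []) (hst : st l < last l)
    (hexc : ¬(st l = l.length ∧ last l = st l + 1)) :
    Good (subTo (st l) l ++ [st l]) ∧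
    (subTo (st l) l ++ [st l]).length = l.length + 1 ∧
    (subTo (st l) l ++ [st l]).sum = l.sum ∧
    franklin (subTo (st l) l ++ [st l]) = l := by
  set k := l.length with hk
  set t := st l with ht
  set s := last l with hs
  set l' := subTo t l ++ [t] with hl'
  have hk0 : 0 < k := by rw [hk]; exact List.length_pos_iff.2 hne
  have ht1 : 1 ≤ t := by rw [ht]; exact st_pos hne
  have htk : t ≤ k := by rw [ht, hk]; exact st_le l
  have hsD : s = D l (k-1) := by rw [hs, hk]; rfl
  have hstD : ∀ i, i < t → D l i = D l 0 - i := fun i hi => st_D (by omega)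
  have hbound : ∀ i, i < t → i < D l 0 := by
    intro i hi
    have h1 := hstD i hi
    have h2 := good_D_pos hG (show i < l.length by omega)
    omega
  have len' : l'.length = k + 1 := by simp [hl', hk]
  have hD1 : ∀ i, i < t → D l' i = D l i - 1 := by
    intro i hi
    rw [hl', D_append_lt (by simp [hk]; omega), D_subTo_lt _ _ _ hi (by omega)]
  have hD2 : ∀ i, t ≤ i → i < k → D l' i = D l i := by
    intro i h1 h2
    rw [hl', D_append_lt (by simp [hk]; omega), D_subTo_ge _ _ _ h1]
  have hDlast : D l' k = t := by
    have hlen2 : (subTo t l).length = k := by simp [hk]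
    rw [hl', ← hlen2]
    exact D_concat_last
  have hmono : ∀ i, i < k → s ≤ D l i := by
    intro i hi
    rw [hsD]
    exact good_D_le hG (by omega) (by omega)
  have hgap : t < k → D l t + 1 < D l (t-1) := by
    intro h
    have h1 : D l t ≠ D l 0 - t := by
      have := st_max (show st l < l.length by omega)
      rw [← ht] at this
      exact this
    have h2 : D l (t-1) = D l 0 - (t-1) := hstD (t-1) (by omega)
    have h3 : D l t < D l (t-1) := good_D_lt hG (by omega) (by omega)
    have h4 := hbound (t-1) (by omega)
    omega
  have hcase : t = k → t + 2 ≤ s := by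
    intro h
    have : ¬(s = t + 1) := fun hh => hexc ⟨by omega, by omega⟩
    omega
  have hGD : ∀ i j, i < j → j < l'.length → D l' j < D l' i := by
    intro i j hij hj
    rw [len'] at hj
    rcases Nat.lt_or_ge j k with hjk | hjk
    · have hlt : D l j < D l i := good_D_lt hG hij (by omega)
      rcases lt_or_ge j t with h1 | h1
      · have hi1 : i < t := by omega
        rw [hD1 i hi1, hD1 j h1]
        have := good_D_pos hG (show j < l.length by omega)
        omega
      · rcases lt_or_ge i t with h2 | h2
        · rw [hD1 i h2, hD2 j h1 hjk]
          have hg := hgap (by omega)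
          have h3 : D l j ≤ D l t := good_D_le hG h1 (by omega)
          have h4 : D l (t-1) ≤ D l i := good_D_le hG (by omega) (by omega)
          omega
        · rw [hD2 i h2 (by omega), hD2 j h1 hjk]; omega
    · have hj' : j = k := by omega
      rw [hj', hDlast]
      have hik : i < k := by omega
      rcases lt_or_ge i t with h2 | h2
      · rw [hD1 i h2]
        have h5 := hmono i hik
        rcases Nat.lt_or_ge t k with htk' | htk'
        · have hg := hgap htk'
          have h4 : D l (t-1) ≤ D l i := good_D_le hG (by omega) (by omega)
          have h6 := hmono t (by omega)
          omega
        · have h6 := hcase (by omega)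
          omega
      · rw [hD2 i h2 hik]
        have h5 := hmono i hik
        omega
  have hGP : ∀ i, i < l'.length → 0 < D l' i := by
    intro i hi
    rcases Nat.lt_or_ge i k with h | h
    · have := hGD i k h (by omega)
      rw [hDlast] at this
      omega
    · have hik : i = k := by rw [len'] at hi; omega
      rw [hik, hDlast]
      omega
  have hsum : l'.sum = l.sum := by
    have h1 := subTo_sum t l (by omega) (fun i hi => good_D_pos hG (by omega))
    rw [hl', List.sum_append]
    simp only [List.sum_cons, List.sum_nil]
    omega
  have hlast' : last l' = t := by
    rw [last_def, len', Nat.add_sub_cancel, hDlast]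
  have hD'0 : D l' 0 = D l 0 - 1 := hD1 0 (by omega)
  have hD0big : t + 1 ≤ D l 0 := by
    rcases Nat.lt_or_ge t k with htk' | htk'
    · have hg := hgap htk'
      have h1 := hstD (t-1) (by omega)
      have h2 := good_D_pos hG (show t < l.length by omega)
      omega
    · have h2 : t = k := by omega
      have h1 := hstD (t-1) (by omega)
      have h3 : D l (t-1) = s := by rw [hsD]; congr 1; omega
      have h4 := hcase h2
      omega
  have hst' : t ≤ st l' := by
    refine st_intro (by omega) (fun i hi => ?_) (fun i hi => ?_)
    · rw [hD1 i hi, hD'0, hstD i hi]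
      have := hbound i hi; omega
    · rw [hD'0]; omega
  have hfr : franklin l' = l := by
    rw [franklin, if_pos (by rw [hlast']; exact hst'),
      if_neg (by rw [hlast', len']; omega)]
    rw [hlast', hl', List.dropLast_concat,
      addTo_subTo _ _ (fun i hi => good_D_pos hG (by omega))]
  exact ⟨good_of_D hGD hGP, len', hsum, hfr⟩



lemma franklin_nil : franklin [] = [] := rfl

theorem franklin_spec {l : List ℕ} (hG : Good l) :
    Good (franklin l) ∧ (franklin l).sum = l.sum ∧ franklin (franklin l) = l ∧
      (franklin l ≠ l → l.length = (franklin l).length + 1 ∨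
        (franklin l).length = l.length + 1) := by
  by_cases hne : l = []
  · subst hne
    rw [franklin_nil]
    exact ⟨⟨List.Pairwise.nil, by simp⟩, rfl, franklin_nil, fun h => absurd rfl h⟩
  by_cases h1 : last l ≤ st l
  · by_cases h2 : last l = l.length
    · have hfix : franklin l = l := by rw [franklin, if_pos h1, if_pos h2]
      rw [hfix]
      exact ⟨hG, rfl, hfix, fun h => absurd rfl h⟩
    · have hF : franklin l = addTo (last l) l.dropLast := by
        rw [franklin, if_pos h1, if_neg h2]
      obtain ⟨g, hlen, hsum, hff⟩ := caseA hG hne h1 h2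
      rw [hF]
      exact ⟨g, hsum, hff, fun _ => Or.inl (by omega)⟩
  · push_neg at h1
    by_cases h2 : st l = l.length ∧ last l = st l + 1
    · have hfix : franklin l = l := by rw [franklin, if_neg (by omega), if_pos h2]
      rw [hfix]
      exact ⟨hG, rfl, hfix, fun h => absurd rfl h⟩
    · have hF : franklin l = subTo (st l) l ++ [st l] := by
        rw [franklin, if_neg (by omega), if_neg h2]
      obtain ⟨g, hlen, hsum, hff⟩ := caseB hG hne h1 h2
      rw [hF]
      exact ⟨g, hsum, hff, fun _ => Or.inr (by omega)⟩

def pentA (k : ℕ) : List ℕ := (List.range k).map (fun i => 2*k - 1 - i)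
def pentB (k : ℕ) : List ℕ := (List.range k).map (fun i => 2*k - i)

@[simp] lemma pentA_length (k : ℕ) : (pentA k).length = k := by simp [pentA]
@[simp] lemma pentB_length (k : ℕ) : (pentB k).length = k := by simp [pentB]

lemma pentA_D {k i : ℕ} (h : i < k) : D (pentA k) i = 2*k - 1 - i := by
  rw [D_eq_getElem _ (by simp [h])]
  simp [pentA]

lemma pentB_D {k i : ℕ} (h : i < k) : D (pentB k) i = 2*k - i := by
  rw [D_eq_getElem _ (by simp [h])]
  simp [pentB]

lemma pentA_good (k : ℕ) : Good (pentA k) := by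
  refine good_of_D (fun i j hij hj => ?_) (fun i hi => ?_)
  · simp only [pentA_length] at hj
    rw [pentA_D (by omega), pentA_D (by omega)]
    omega
  · simp only [pentA_length] at hi
    rw [pentA_D hi]
    omega

lemma pentB_good (k : ℕ) : Good (pentB k) := by
  refine good_of_D (fun i j hij hj => ?_) (fun i hi => ?_)
  · simp only [pentB_length] at hj
    rw [pentB_D (by omega), pentB_D (by omega)]
    omega
  · simp only [pentB_length] at hi
    rw [pentB_D hi]
    omega

lemma eq_of_D {l₁ l₂ : List ℕ} (hlen : l₁.length = l₂.length)
    (h : ∀ i, i < l₁.length → D l₁ i = D l₂ i) : l₁ = l₂ :=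
  List.ext_getElem hlen (fun i h1 h2 => by
    rw [← D_eq_getElem _ h1, ← D_eq_getElem _ h2]; exact h i h1)

theorem franklin_fixed {l : List ℕ} (hG : Good l) (hf : franklin l = l) :
    ∃ k, l = pentA k ∨ l = pentB k := by
  by_cases hne : l = []
  · exact ⟨0, Or.inl (by simp [hne, pentA])⟩
  have hk0 : 0 < l.length := List.length_pos_iff.2 hne
  by_cases h1 : last l ≤ st l
  · by_cases h2 : last l = l.length
    · refine ⟨l.length, Or.inl ?_⟩
      have hstle : st l ≤ l.length := st_le l
      have hstk : st l = l.length := by omega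
      refine eq_of_D (by simp) (fun i hi => ?_)
      have hD := st_D (show i < st l by omega)
      have hD0 : D l 0 = 2 * l.length - 1 := by
        have hl := st_D (show l.length - 1 < st l by omega)
        have hld := last_def l
        have hp := good_D_pos hG (show l.length - 1 < l.length by omega)
        omega
      rw [hD, pentA_D (by omega), hD0]
    · obtain ⟨_, hlen, _, _⟩ := caseA hG hne h1 h2
      exfalso
      rw [franklin, if_pos h1, if_neg h2] at hf
      have := congrArg List.length hf
      omega
  · push_neg at h1
    by_cases h2 : st l = l.length ∧ last l = st l + 1
    · refine ⟨l.length, Or.inr ?_⟩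
      obtain ⟨h2a, h2b⟩ := h2
      refine eq_of_D (by simp) (fun i hi => ?_)
      have hD := st_D (show i < st l by omega)
      have hD0 : D l 0 = 2 * l.length := by
        have hl := st_D (show l.length - 1 < st l by omega)
        have hld := last_def l
        omega
      rw [hD, pentB_D (by omega), hD0]
    · obtain ⟨_, hlen, _, _⟩ := caseB hG hne h1 h2
      exfalso
      rw [franklin, if_neg (by omega), if_neg h2] at hf
      have := congrArg List.length hf
      omega

theorem franklin_pentA (k : ℕ) : franklin (pentA k) = pentA k := by
  rcases Nat.eq_zero_or_pos k with rfl | hk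
  · have : pentA 0 = [] := by simp [pentA]
    rw [this, franklin_nil]
  · have hD0 : D (pentA k) 0 = 2*k-1 := by rw [pentA_D hk]; omega
    have hst : st (pentA k) = k := by
      refine le_antisymm (by have := st_le (pentA k); simpa using this) ?_
      refine st_intro (by simp) (fun i hi => ?_) (fun i hi => ?_)
      · rw [pentA_D hi, hD0]
      · rw [hD0]; omega
    have hlast : last (pentA k) = k := by
      rw [last_def, pentA_length, pentA_D (by omega)]
      omega
    rw [franklin, hlast, hst, if_pos le_rfl, if_pos (by simp)]

theorem franklin_pentB (k : ℕ) : franklin (pentB k) = pentB k := by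
  rcases Nat.eq_zero_or_pos k with rfl | hk
  · have : pentB 0 = [] := by simp [pentB]
    rw [this, franklin_nil]
  · have hD0 : D (pentB k) 0 = 2*k := by rw [pentB_D hk]; omega
    have hst : st (pentB k) = k := by
      refine le_antisymm (by have := st_le (pentB k); simpa using this) ?_
      refine st_intro (by simp) (fun i hi => ?_) (fun i hi => ?_)
      · rw [pentB_D hi, hD0]
      · rw [hD0]; omega
    have hlast : last (pentB k) = k + 1 := by
      rw [last_def, pentB_length, pentB_D (by omega)]
      omega
    rw [franklin, hlast, hst, if_neg (by omega), if_pos ⟨by simp, rfl⟩]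

lemma range_map_sum (k : ℕ) (f : ℕ → ℕ) :
    ((List.range k).map f).sum = ∑ i ∈ Finset.range k, f i := by
  induction k with
  | zero => simp
  | succ n ih =>
    rw [List.range_succ, Finset.sum_range_succ, List.map_append, List.sum_append, ih]
    simp

lemma pentA_sum (k : ℕ) : 2 * (pentA k).sum + k = 3 * (k * k) := by
  have h1 : (pentA k).sum = ∑ i ∈ Finset.range k, (2*k - 1 - i) := range_map_sum k _
  have h2 : ∑ i ∈ Finset.range k, (2*k - 1 - i) = ∑ i ∈ Finset.range k, (k + i) := by
    rw [← Finset.sum_range_reflect (fun i => k + i) k]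
    refine Finset.sum_congr rfl (fun i hi => ?_)
    rw [Finset.mem_range] at hi
    omega
  have h3 : (∑ i ∈ Finset.range k, i) * 2 = k * (k-1) := Finset.sum_range_id_mul_two k
  have h4 : k * (k-1) + k = k * k := by
    cases k with
    | zero => simp
    | succ m => simp [Nat.succ_sub_one]; ring
  rw [h1, h2, Finset.sum_add_distrib, Finset.sum_const, Finset.card_range, smul_eq_mul]
  omega

lemma pentB_sum (k : ℕ) : 2 * (pentB k).sum = 3 * (k * k) + k := by
  have h1 : (pentB k).sum = ∑ i ∈ Finset.range k, (2*k - i) := range_map_sum k _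
  have h2 : ∑ i ∈ Finset.range k, (2*k - i) = ∑ i ∈ Finset.range k, (k + 1 + i) := by
    rw [← Finset.sum_range_reflect (fun i => k + 1 + i) k]
    refine Finset.sum_congr rfl (fun i hi => ?_)
    rw [Finset.mem_range] at hi
    omega
  have h3 : (∑ i ∈ Finset.range k, i) * 2 = k * (k-1) := Finset.sum_range_id_mul_two k
  have h4 : k * (k-1) + k = k * k := by
    cases k with
    | zero => simp
    | succ m => simp [Nat.succ_sub_one]; ring
  have h5 : k * (k+1) = k * k + k := by ring
  rw [h1, h2, Finset.sum_add_distrib, Finset.sum_const, Finset.card_range, smul_eq_mul]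
  omega



open Multiset

def sortD (s : Multiset ℕ) : List ℕ := s.sort (· ≥ ·)

lemma sortD_coe {l : List ℕ} (h : l.Pairwise (· ≥ ·)) : sortD (↑l) = l := by
  have h1 : (sortD (↑l : Multiset ℕ) : List ℕ).Perm l :=
    Multiset.coe_eq_coe.1 (Multiset.sort_eq _ _)
  exact List.Perm.eq_of_pairwise' (Multiset.pairwise_sort _ _) h h1

lemma good_sorted_ge {l : List ℕ} (h : Good l) : l.Pairwise (· ≥ ·) :=
  h.1.imp (fun hab => le_of_lt hab)

lemma good_coe_nodup {l : List ℕ} (h : Good l) : (↑l : Multiset ℕ).Nodup := by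
  rw [Multiset.coe_nodup]
  exact h.1.imp (fun hab => ne_of_gt hab)

lemma good_sortD {s : Multiset ℕ} (hnd : s.Nodup) (hpos : ∀ x ∈ s, 0 < x) :
    Good (sortD s) := by
  constructor
  · have h1 : (sortD s).Pairwise (· ≥ ·) := Multiset.pairwise_sort _ _
    have h2 : (sortD s).Nodup := by
      have hc : (↑(sortD s) : Multiset ℕ) = s := Multiset.sort_eq _ _
      rw [← Multiset.coe_nodup, hc]
      exact hnd
    exact (h1.and h2).imp (fun hab => lt_of_le_of_ne hab.1 (Ne.symm hab.2))
  · intro x hx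
    exact hpos x (by rwa [← Multiset.mem_sort (· ≥ ·)])

noncomputable def franklinM (s : Multiset ℕ) : Multiset ℕ := ↑(franklin (sortD s))

theorem franklinM_spec {s : Multiset ℕ} (hnd : s.Nodup) (hpos : ∀ x ∈ s, 0 < x) :
    (franklinM s).Nodup ∧ (∀ x ∈ franklinM s, 0 < x) ∧ (franklinM s).sum = s.sum ∧
    franklinM (franklinM s) = s ∧
    (franklinM s ≠ s → Multiset.card (franklinM s) + 1 = Multiset.card s ∨
      Multiset.card (franklinM s) = Multiset.card s + 1) := by
  have hG : Good (sortD s) := good_sortD hnd hpos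
  obtain ⟨hG', hsum, hff, hlen⟩ := franklin_spec hG
  have hcoe : (↑(sortD s) : Multiset ℕ) = s := Multiset.sort_eq _ _
  refine ⟨good_coe_nodup hG', ?_, ?_, ?_, ?_⟩
  · intro x hx
    exact hG'.2 x (by rwa [← Multiset.mem_coe])
  · rw [franklinM, Multiset.sum_coe, hsum, ← Multiset.sum_coe, hcoe]
  · rw [franklinM, franklinM, sortD_coe (good_sorted_ge hG'), hff, hcoe]
  · intro hne
    have hne2 : franklin (sortD s) ≠ sortD s := by
      intro hh
      apply hne
      rw [franklinM, hh, hcoe]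
    have := hlen hne2
    have hcard : Multiset.card s = (sortD s).length := by
      conv_lhs => rw [← hcoe]
      rw [Multiset.coe_card]
    rw [franklinM, Multiset.coe_card, hcard]
    omega

def cond (n : ℕ) (p : Multiset ℕ × Multiset ℕ) : Prop :=
  (∀ x ∈ p.1, 0 < x) ∧ p.2.Nodup ∧ (∀ x ∈ p.2, 0 < x ∧ Even x) ∧ p.1.sum + p.2.sum = n

open scoped Classical in
noncomputable def invol (p : Multiset ℕ × Multiset ℕ) : Multiset ℕ × Multiset ℕ :=
  if h : ∃ k, 2 ≤ p.1.count k ∨ 2*k ∈ p.2 then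
    if 2 * (Nat.find h) ∈ p.2 then
      ((Nat.find h) ::ₘ (Nat.find h) ::ₘ p.1, p.2.erase (2 * (Nat.find h)))
    else ((p.1.erase (Nat.find h)).erase (Nat.find h), 2 * (Nat.find h) ::ₘ p.2)
  else (franklinM p.1, 0)



open Multiset

theorem invol_spec {n : ℕ} {p : Multiset ℕ × Multiset ℕ} (hc : cond n p) :
    cond n (invol p) ∧ invol (invol p) = p ∧
    (invol p ≠ p →
      Multiset.card (invol p).1 + Multiset.card (invol p).2 + 1 =
        Multiset.card p.1 + Multiset.card p.2 ∨
      Multiset.card (invol p).1 + Multiset.card (invol p).2 =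
        Multiset.card p.1 + Multiset.card p.2 + 1) := by
  obtain ⟨hp1, hnd, hp2, hsum⟩ := hc
  by_cases h : ∃ k, 2 ≤ p.1.count k ∨ 2*k ∈ p.2
  · set k := Nat.find h with hkdef
    have hmin : ∀ j, j < k → ¬(2 ≤ p.1.count j ∨ 2*j ∈ p.2) := fun j hj => Nat.find_min h hj
    by_cases ht : 2*k ∈ p.2
    · have hq : invol p = (k ::ₘ k ::ₘ p.1, p.2.erase (2*k)) := by
        rw [invol, dif_pos h, if_pos ht]
      have hk1 : 0 < k := by
        have := (hp2 _ ht).1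
        omega
      have hq2sum : (p.2.erase (2*k)).sum + 2*k = p.2.sum := by
        have h2 := congrArg Multiset.sum (Multiset.cons_erase ht)
        rw [Multiset.sum_cons] at h2
        omega
      have hcondq : cond n (k ::ₘ k ::ₘ p.1, p.2.erase (2*k)) := by
        refine ⟨?_, hnd.erase _, ?_, ?_⟩
        · intro x hx
          rcases Multiset.mem_cons.1 hx with rfl | hx
          · exact hk1
          rcases Multiset.mem_cons.1 hx with rfl | hx
          · exact hk1
          · exact hp1 x hx
        · exact fun x hx => hp2 x (Multiset.mem_of_mem_erase hx)
        · show (k ::ₘ k ::ₘ p.1).sum + (p.2.erase (2*k)).sum = n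
          simp only [Multiset.sum_cons]
          omega
      have hq' : ∃ j, 2 ≤ (k ::ₘ k ::ₘ p.1).count j ∨ 2*j ∈ p.2.erase (2*k) :=
        ⟨k, Or.inl (by simp)⟩
      have hfind : Nat.find hq' = k := by
        rw [Nat.find_eq_iff]
        refine ⟨Or.inl (by simp), fun j hj hpred => ?_⟩
        refine hmin j hj ?_
        rcases hpred with hcnt | hmem
        · left
          rwa [Multiset.count_cons_of_ne (by omega), Multiset.count_cons_of_ne (by omega)]
            at hcnt
        · right
          exact Multiset.mem_of_mem_erase hmem
      have hnotmem : 2*k ∉ p.2.erase (2*k) := by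
        intro hmem
        have h1 : Multiset.count (2*k) p.2 ≤ 1 := Multiset.nodup_iff_count_le_one.1 hnd _
        have h2 : 0 < Multiset.count (2*k) (p.2.erase (2*k)) := Multiset.count_pos.2 hmem
        have h3 : Multiset.count (2*k) (p.2.erase (2*k)) = Multiset.count (2*k) p.2 - 1 :=
          Multiset.count_erase_self _ _
        omega
      have hinv : invol (k ::ₘ k ::ₘ p.1, p.2.erase (2*k)) = p := by
        rw [invol, dif_pos hq', hfind, if_neg hnotmem]
        have e1 : (((k ::ₘ k ::ₘ p.1, p.2.erase (2*k)).1.erase k).erase k) = p.1 := by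
          show ((k ::ₘ k ::ₘ p.1).erase k).erase k = p.1
          rw [Multiset.erase_cons_head, Multiset.erase_cons_head]
        rw [e1]
        show (p.1, 2*k ::ₘ p.2.erase (2*k)) = p
        rw [Multiset.cons_erase ht]
      have hcards : Multiset.card (k ::ₘ k ::ₘ p.1) + Multiset.card (p.2.erase (2*k)) =
          Multiset.card p.1 + Multiset.card p.2 + 1 := by
        have c2 : Multiset.card (p.2.erase (2*k)) = Multiset.card p.2 - 1 := by
          exact Multiset.card_erase_of_mem ht
        have c0 : 0 < Multiset.card p.2 := Multiset.card_pos_iff_exists_mem.2 ⟨_, ht⟩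
        simp only [Multiset.card_cons]
        omega
      rw [hq]
      exact ⟨hcondq, hinv, fun _ => Or.inr hcards⟩
    · have hcnt : 2 ≤ p.1.count k := (Nat.find_spec h).resolve_right ht
      have hq : invol p = ((p.1.erase k).erase k, 2*k ::ₘ p.2) := by
        rw [invol, dif_pos h, if_neg ht]
      have hmem1 : k ∈ p.1 := by rw [← Multiset.count_pos]; omega
      have hmem2 : k ∈ p.1.erase k := by
        rw [← Multiset.count_pos, Multiset.count_erase_self]
        omega
      have hk1 : 0 < k := hp1 _ hmem1
      have hrec : p.1 = k ::ₘ k ::ₘ (p.1.erase k).erase k := by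
        conv_lhs => rw [← Multiset.cons_erase hmem1, ← Multiset.cons_erase hmem2]
      have hcondq : cond n ((p.1.erase k).erase k, 2*k ::ₘ p.2) := by
        refine ⟨fun x hx =>
          hp1 x (Multiset.mem_of_mem_erase (Multiset.mem_of_mem_erase hx)), ?_, ?_, ?_⟩
        · exact Multiset.nodup_cons.2 ⟨ht, hnd⟩
        · intro x hx
          rcases Multiset.mem_cons.1 hx with rfl | hx
          · exact ⟨by omega, ⟨k, by ring⟩⟩
          · exact hp2 x hx
        · have h1 := congrArg Multiset.sum hrec
          simp only [Multiset.sum_cons] at h1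
          show ((p.1.erase k).erase k).sum + (2*k ::ₘ p.2).sum = n
          rw [Multiset.sum_cons]
          omega
      have hq' : ∃ j, 2 ≤ ((p.1.erase k).erase k).count j ∨ 2*j ∈ 2*k ::ₘ p.2 :=
        ⟨k, Or.inr (Multiset.mem_cons_self _ _)⟩
      have hfind : Nat.find hq' = k := by
        rw [Nat.find_eq_iff]
        refine ⟨Or.inr (Multiset.mem_cons_self _ _), fun j hj hpred => ?_⟩
        refine hmin j hj ?_
        rcases hpred with hcnt2 | hmem
        · left
          rwa [Multiset.count_erase_of_ne (by omega), Multiset.count_erase_of_ne (by omega)]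
            at hcnt2
        · rcases Multiset.mem_cons.1 hmem with heq | hmem2
          · omega
          · exact Or.inr hmem2
      have hinv : invol ((p.1.erase k).erase k, 2*k ::ₘ p.2) = p := by
        rw [invol, dif_pos hq', hfind, if_pos (Multiset.mem_cons_self _ _)]
        show (k ::ₘ k ::ₘ (p.1.erase k).erase k, (2*k ::ₘ p.2).erase (2*k)) = p
        rw [Multiset.erase_cons_head, ← hrec]
      have hcards : Multiset.card ((p.1.erase k).erase k) + Multiset.card (2*k ::ₘ p.2) + 1 =
          Multiset.card p.1 + Multiset.card p.2 := by
        have h1 := congrArg Multiset.card hrec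
        simp only [Multiset.card_cons] at h1 ⊢
        omega
      rw [hq]
      exact ⟨hcondq, hinv, fun _ => Or.inl hcards⟩
  · have hp20 : p.2 = 0 := by
      by_contra hne
      obtain ⟨x, hx⟩ := Multiset.exists_mem_of_ne_zero hne
      obtain ⟨hxpos, r, hr⟩ := hp2 x hx
      exact h ⟨r, Or.inr (by rw [show 2*r = r + r by ring, ← hr]; exact hx)⟩
    have hnd1 : p.1.Nodup := by
      rw [Multiset.nodup_iff_count_le_one]
      intro a
      by_contra hcnt
      exact h ⟨a, Or.inl (by omega)⟩
    have hq : invol p = (franklinM p.1, 0) := by rw [invol, dif_neg h]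
    obtain ⟨fnd, fpos, fsum, finv, fcard⟩ := franklinM_spec hnd1 hp1
    have hnoth : ¬ ∃ j, 2 ≤ (franklinM p.1).count j ∨ 2*j ∈ (0 : Multiset ℕ) := by
      rintro ⟨j, hj | hj⟩
      · have := Multiset.nodup_iff_count_le_one.1 fnd j
        omega
      · simp at hj
    have hs2 : p.2.sum = 0 := by rw [hp20]; rfl
    have hc2 : Multiset.card p.2 = 0 := by rw [hp20]; rfl
    have hinv : invol (invol p) = p := by
      rw [hq, invol, dif_neg hnoth]
      show (franklinM (franklinM p.1), (0 : Multiset ℕ)) = p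
      rw [finv, ← hp20]
    refine ⟨?_, hinv, ?_⟩
    · rw [hq]
      refine ⟨fpos, Multiset.nodup_zero, fun x hx => absurd hx (Multiset.notMem_zero x), ?_⟩
      show (franklinM p.1).sum + (0 : Multiset ℕ).sum = n
      rw [fsum, Multiset.sum_zero]
      omega
    · intro hne
      rw [hq] at hne ⊢
      have hne1 : franklinM p.1 ≠ p.1 := by
        intro hh
        apply hne
        rw [hh, ← hp20]
      have := fcard hne1
      show Multiset.card (franklinM p.1) + Multiset.card (0 : Multiset ℕ) + 1 = _ ∨
        Multiset.card (franklinM p.1) + Multiset.card (0 : Multiset ℕ) = _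
      simp only [Multiset.card_zero]
      omega



open Multiset

lemma card_le_sum {s : Multiset ℕ} (h : ∀ x ∈ s, 0 < x) : Multiset.card s ≤ s.sum := by
  induction s using Multiset.induction_on with
  | empty => simp
  | cons a s ih =>
    simp only [Multiset.card_cons, Multiset.sum_cons]
    have ha : 0 < a := h a (Multiset.mem_cons_self _ _)
    have := ih (fun x hx => h x (Multiset.mem_cons_of_mem hx))
    omega

def M (n : ℕ) : Finset (Multiset ℕ) := (n • Multiset.range (n+1)).powerset.toFinset

lemma mem_M {n : ℕ} {s : Multiset ℕ} (hpos : ∀ x ∈ s, 0 < x) (hsum : s.sum ≤ n) :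
    s ∈ M n := by
  rw [M, Multiset.mem_toFinset, Multiset.mem_powerset, Multiset.le_iff_count]
  intro a
  rcases Nat.eq_zero_or_pos (s.count a) with h0 | hpos'
  · simp [h0]
  · have ha : a ∈ s := Multiset.count_pos.1 hpos'
    have hale : a ≤ s.sum := Multiset.single_le_sum (fun x _ => Nat.zero_le x) a ha
    have hcard : s.count a ≤ Multiset.card s := Multiset.count_le_card _ _
    have hcs : Multiset.card s ≤ s.sum := card_le_sum hpos
    have hcount : Multiset.count a (n • Multiset.range (n+1)) = n := by
      rw [Multiset.count_nsmul,
        Multiset.count_eq_one_of_mem (Multiset.nodup_range _) (Multiset.mem_range.2 (by omega)),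
        mul_one]
    omega

open scoped Classical in
noncomputable def P (n : ℕ) : Finset (Multiset ℕ × Multiset ℕ) :=
  ((M n) ×ˢ (M n)).filter (fun p => cond n p)

lemma mem_P {n : ℕ} {p : Multiset ℕ × Multiset ℕ} : p ∈ P n ↔ cond n p := by
  classical
  constructor
  · intro h
    exact (Finset.mem_filter.1 h).2
  · intro h
    obtain ⟨h1, h2, h3, h4⟩ := h
    refine Finset.mem_filter.2 ⟨Finset.mem_product.2 ⟨mem_M h1 (by omega), ?_⟩, h1, h2, h3, h4⟩
    exact mem_M (fun x hx => (h3 x hx).1) (by omega)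

def psign (p : Multiset ℕ × Multiset ℕ) : ℤ :=
  (-1) ^ (Multiset.card p.1 + Multiset.card p.2)

lemma card_sub_card (X : Type*) [Fintype X] (b : X → Prop) [DecidablePred b] (f : X → ℕ) :
    ((Fintype.card {x : X // b x ∧ Even (f x)} : ℤ) -
      (Fintype.card {x : X // b x ∧ Odd (f x)} : ℤ)) =
    ∑ x ∈ Finset.univ.filter b, (-1 : ℤ) ^ (f x) := by
  have hA : Fintype.card {x : X // b x ∧ Even (f x)} =
      ((Finset.univ.filter b).filter (fun x => Even (f x))).card := by
    rw [Fintype.card_subtype, Finset.filter_filter]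
  have hB : Fintype.card {x : X // b x ∧ Odd (f x)} =
      ((Finset.univ.filter b).filter (fun x => ¬ Even (f x))).card := by
    rw [Fintype.card_subtype, Finset.filter_filter]
    congr 1
    apply Finset.filter_congr
    intro x _
    exact and_congr_right fun _ => Nat.not_even_iff_odd.symm
  have e1 : ∑ x ∈ (Finset.univ.filter b).filter (fun x => Even (f x)), (-1:ℤ)^(f x)
      = ((Finset.univ.filter b).filter (fun x => Even (f x))).card := by
    rw [Finset.sum_congr rfl (fun x hx => Even.neg_one_pow (Finset.mem_filter.1 hx).2),
      Finset.sum_const, nsmul_eq_mul, mul_one]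
  have e2 : ∑ x ∈ (Finset.univ.filter b).filter (fun x => ¬ Even (f x)), (-1:ℤ)^(f x)
      = -((Finset.univ.filter b).filter (fun x => ¬ Even (f x))).card := by
    rw [Finset.sum_congr rfl
      (fun x hx => Odd.neg_one_pow (Nat.not_even_iff_odd.symm.2 (Finset.mem_filter.1 hx).2)),
      Finset.sum_const, nsmul_eq_mul]
    ring
  rw [hA, hB,
    ← Finset.sum_filter_add_sum_filter_not (Finset.univ.filter b) (fun x => Even (f x))
      (fun x => (-1:ℤ)^(f x)), e1, e2]
  push_cast
  ring



open Multiset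

set_option maxHeartbeats 1000000 in
theorem bridge (n : ℕ) : (d2e n : ℤ) - (d2o n : ℤ) = ∑ p ∈ P n, psign p := by
  rw [d2e, d2o]
  push_cast
  rw [← Finset.sum_sub_distrib]
  have hstep : ∀ m ∈ Finset.range (n+1),
      ((Fintype.card {q : Nat.Partition m × Nat.Partition (n - m) //
          q.2.parts.Nodup ∧ (∀ x ∈ q.2.parts, Even x) ∧
            Even (Multiset.card q.1.parts + Multiset.card q.2.parts)} : ℤ) -
        (Fintype.card {q : Nat.Partition m × Nat.Partition (n - m) //
          q.2.parts.Nodup ∧ (∀ x ∈ q.2.parts, Even x) ∧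
            Odd (Multiset.card q.1.parts + Multiset.card q.2.parts)} : ℤ)) =
      ∑ q ∈ Finset.univ.filter (fun q : Nat.Partition m × Nat.Partition (n-m) =>
          q.2.parts.Nodup ∧ ∀ x ∈ q.2.parts, Even x),
        (-1:ℤ)^(Multiset.card q.1.parts + Multiset.card q.2.parts) := by
    intro m _
    have e1 : Fintype.card {q : Nat.Partition m × Nat.Partition (n - m) //
        q.2.parts.Nodup ∧ (∀ x ∈ q.2.parts, Even x) ∧
          Even (Multiset.card q.1.parts + Multiset.card q.2.parts)} =
        Fintype.card {q : Nat.Partition m × Nat.Partition (n - m) //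
        (q.2.parts.Nodup ∧ (∀ x ∈ q.2.parts, Even x)) ∧
          Even (Multiset.card q.1.parts + Multiset.card q.2.parts)} :=
      Fintype.card_congr (Equiv.subtypeEquivRight (fun x => by tauto))
    have e2 : Fintype.card {q : Nat.Partition m × Nat.Partition (n - m) //
        q.2.parts.Nodup ∧ (∀ x ∈ q.2.parts, Even x) ∧
          Odd (Multiset.card q.1.parts + Multiset.card q.2.parts)} =
        Fintype.card {q : Nat.Partition m × Nat.Partition (n - m) //
        (q.2.parts.Nodup ∧ (∀ x ∈ q.2.parts, Even x)) ∧
          Odd (Multiset.card q.1.parts + Multiset.card q.2.parts)} :=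
      Fintype.card_congr (Equiv.subtypeEquivRight (fun x => by tauto))
    rw [e1, e2, card_sub_card]
  rw [Finset.sum_congr rfl hstep, Finset.sum_sigma']
  refine Finset.sum_bij (fun x _ => (x.2.1.parts, x.2.2.parts)) ?_ ?_ ?_ ?_
  · intro a ha
    rw [Finset.mem_sigma] at ha
    obtain ⟨hm, hq⟩ := ha
    rw [Finset.mem_filter] at hq
    obtain ⟨-, hnd, hev⟩ := hq
    rw [Finset.mem_range] at hm
    refine mem_P.2 ⟨fun x hx => a.2.1.parts_pos hx, hnd,
      fun x hx => ⟨a.2.2.parts_pos hx, hev x hx⟩, ?_⟩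
    rw [a.2.1.parts_sum, a.2.2.parts_sum]
    omega
  · intro a ha b hb hab
    have h1 : a.2.1.parts = b.2.1.parts := congrArg Prod.fst hab
    have h2 : a.2.2.parts = b.2.2.parts := congrArg Prod.snd hab
    obtain ⟨ma, qa1, qa2⟩ := a
    obtain ⟨mb, qb1, qb2⟩ := b
    have hm : ma = mb := by
      rw [← qa1.parts_sum, ← qb1.parts_sum]
      exact congrArg Multiset.sum h1
    subst hm
    exact congrArg (Sigma.mk ma) (Prod.ext (Nat.Partition.ext h1) (Nat.Partition.ext h2))
  · intro b hb
    obtain ⟨h1, h2, h3, h4⟩ := mem_P.1 hb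
    refine ⟨⟨b.1.sum, (⟨b.1, fun {i} hi => h1 i hi, rfl⟩,
      ⟨b.2, fun {i} hi => (h3 i hi).1, show b.2.sum = n - b.1.sum by omega⟩)⟩, ?_, ?_⟩
    · refine Finset.mem_sigma.2 ⟨Finset.mem_range.2 (by show b.1.sum < n + 1; omega), Finset.mem_filter.2
        ⟨Finset.mem_univ _, h2, fun x hx => (h3 x hx).2⟩⟩
    · exact Prod.mk.eta
  · intro a ha
    rfl



open Multiset

lemma psign_add_eq_zero {p q : Multiset ℕ × Multiset ℕ}
    (h : Multiset.card q.1 + Multiset.card q.2 + 1 = Multiset.card p.1 + Multiset.card p.2 ∨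
         Multiset.card q.1 + Multiset.card q.2 = Multiset.card p.1 + Multiset.card p.2 + 1) :
    psign p + psign q = 0 := by
  rcases h with h | h
  · rw [psign, psign, ← h, pow_succ]
    ring
  · rw [psign, psign, h, pow_succ]
    ring

open scoped Classical in
theorem sum_P_eq_fix (n : ℕ) :
    ∑ p ∈ P n, psign p = ∑ p ∈ (P n).filter (fun p => invol p = p), psign p := by
  rw [← Finset.sum_filter_add_sum_filter_not (P n) (fun p => invol p = p) psign]
  have hzero : ∑ p ∈ (P n).filter (fun p => ¬ invol p = p), psign p = 0 := by
    refine Finset.sum_involution (fun p _ => invol p) ?_ ?_ ?_ ?_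
    · intro a ha
      obtain ⟨hmem, hne⟩ := Finset.mem_filter.1 ha
      obtain ⟨hcond, hinv, hcard⟩ := invol_spec (mem_P.1 hmem)
      exact psign_add_eq_zero (hcard hne)
    · intro a ha _
      exact (Finset.mem_filter.1 ha).2
    · intro a ha
      obtain ⟨hmem, hne⟩ := Finset.mem_filter.1 ha
      obtain ⟨hcond, hinv, hcard⟩ := invol_spec (mem_P.1 hmem)
      refine Finset.mem_filter.2 ⟨mem_P.2 hcond, ?_⟩
      intro hfix
      exact hne (hfix.symm.trans hinv)
    · intro a ha
      exact (invol_spec (mem_P.1 (Finset.mem_filter.1 ha).1)).2.1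
  rw [hzero, add_zero]

def pairA (k : ℕ) : Multiset ℕ × Multiset ℕ := (↑(pentA k), 0)
def pairB (k : ℕ) : Multiset ℕ × Multiset ℕ := (↑(pentB k), 0)

lemma pairA_zero : pairA 0 = pairB 0 := by
  simp [pairA, pairB, pentA, pentB]

theorem fix_shape {n : ℕ} {p : Multiset ℕ × Multiset ℕ} (hc : cond n p) (hf : invol p = p) :
    ∃ k, (p = pairA k ∧ 2*n + k = 3*(k*k)) ∨ (p = pairB k ∧ 2*n = 3*(k*k) + k) := by
  obtain ⟨hp1, hnd, hp2, hsum⟩ := hc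
  by_cases h : ∃ k, 2 ≤ p.1.count k ∨ 2*k ∈ p.2
  · exfalso
    by_cases ht : 2*(Nat.find h) ∈ p.2
    · have hq : invol p = ((Nat.find h) ::ₘ (Nat.find h) ::ₘ p.1,
          p.2.erase (2*(Nat.find h))) := by
        rw [invol, dif_pos h, if_pos ht]
      have := congrArg (fun q : Multiset ℕ × Multiset ℕ => Multiset.card q.1)
        (hq.symm.trans hf)
      simp only [Multiset.card_cons] at this
      omega
    · have hq : invol p = ((p.1.erase (Nat.find h)).erase (Nat.find h),
          2*(Nat.find h) ::ₘ p.2) := by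
        rw [invol, dif_pos h, if_neg ht]
      have := congrArg (fun q : Multiset ℕ × Multiset ℕ => Multiset.card q.2)
        (hq.symm.trans hf)
      simp only [Multiset.card_cons] at this
      omega
  · have hp20 : p.2 = 0 := by
      by_contra hne
      obtain ⟨x, hx⟩ := Multiset.exists_mem_of_ne_zero hne
      obtain ⟨hxpos, r, hr⟩ := hp2 x hx
      exact h ⟨r, Or.inr (by rw [show 2*r = r + r by ring, ← hr]; exact hx)⟩
    have hnd1 : p.1.Nodup := by
      rw [Multiset.nodup_iff_count_le_one]
      intro a
      by_contra hcnt
      exact h ⟨a, Or.inl (by omega)⟩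
    have hq : invol p = (franklinM p.1, 0) := by rw [invol, dif_neg h]
    have hfm : franklinM p.1 = p.1 := congrArg Prod.fst (hq.symm.trans hf)
    have hG : Good (sortD p.1) := good_sortD hnd1 hp1
    have hcoe : (↑(sortD p.1) : Multiset ℕ) = p.1 := Multiset.sort_eq _ _
    have hfix : franklin (sortD p.1) = sortD p.1 := by
      by_contra hne
      obtain ⟨_, _, _, hlen⟩ := franklin_spec hG
      have hcards : (franklin (sortD p.1)).length = (sortD p.1).length := by
        have hcc : (↑(franklin (sortD p.1)) : Multiset ℕ) = ↑(sortD p.1) := by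
          show franklinM p.1 = _
          rw [hfm, hcoe]
        have := congrArg Multiset.card hcc
        simpa [Multiset.coe_card] using this
      rcases hlen hne with hh | hh <;> omega
    have h0 : p.2.sum = 0 := by rw [hp20]; rfl
    obtain ⟨k, hk | hk⟩ := franklin_fixed hG hfix
    · refine ⟨k, Or.inl ⟨?_, ?_⟩⟩
      · have hp1e : p.1 = ↑(pentA k) := by rw [← hcoe, hk]
        rw [pairA, ← hp1e, ← hp20]
      · have hsumA := pentA_sum k
        have he : p.1.sum = (pentA k).sum := by rw [← hcoe, hk, Multiset.sum_coe]
        omega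
    · refine ⟨k, Or.inr ⟨?_, ?_⟩⟩
      · have hp1e : p.1 = ↑(pentB k) := by rw [← hcoe, hk]
        rw [pairB, ← hp1e, ← hp20]
      · have hsumB := pentB_sum k
        have he : p.1.sum = (pentB k).sum := by rw [← hcoe, hk, Multiset.sum_coe]
        omega

theorem pairA_mem_fix {n k : ℕ} (hsum : 2*n + k = 3*(k*k)) :
    pairA k ∈ P n ∧ invol (pairA k) = pairA k := by
  have hG := pentA_good k
  constructor
  · refine mem_P.2 ⟨fun x hx => hG.2 x (Multiset.mem_coe.1 hx), Multiset.nodup_zero,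
      fun x hx => absurd hx (Multiset.notMem_zero x), ?_⟩
    show (↑(pentA k) : Multiset ℕ).sum + (0 : Multiset ℕ).sum = n
    rw [Multiset.sum_coe, Multiset.sum_zero]
    have := pentA_sum k
    omega
  · have hnoth : ¬ ∃ j, 2 ≤ Multiset.count j (pairA k).1 ∨ 2*j ∈ (pairA k).2 := by
      rintro ⟨j, hj | hj⟩
      · have hnd := good_coe_nodup hG
        have h1 := Multiset.nodup_iff_count_le_one.1 hnd j
        have h2 : Multiset.count j (pairA k).1 =
            Multiset.count j (↑(pentA k) : Multiset ℕ) := rfl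
        omega
      · exact Multiset.notMem_zero _ hj
    rw [invol, dif_neg hnoth]
    show (franklinM (↑(pentA k)), (0 : Multiset ℕ)) = pairA k
    rw [franklinM, sortD_coe (good_sorted_ge hG), franklin_pentA]
    rfl

theorem pairB_mem_fix {n k : ℕ} (hsum : 2*n = 3*(k*k) + k) :
    pairB k ∈ P n ∧ invol (pairB k) = pairB k := by
  have hG := pentB_good k
  constructor
  · refine mem_P.2 ⟨fun x hx => hG.2 x (Multiset.mem_coe.1 hx), Multiset.nodup_zero,
      fun x hx => absurd hx (Multiset.notMem_zero x), ?_⟩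
    show (↑(pentB k) : Multiset ℕ).sum + (0 : Multiset ℕ).sum = n
    rw [Multiset.sum_coe, Multiset.sum_zero]
    have := pentB_sum k
    omega
  · have hnoth : ¬ ∃ j, 2 ≤ Multiset.count j (pairB k).1 ∨ 2*j ∈ (pairB k).2 := by
      rintro ⟨j, hj | hj⟩
      · have hnd := good_coe_nodup hG
        have h1 := Multiset.nodup_iff_count_le_one.1 hnd j
        have h2 : Multiset.count j (pairB k).1 =
            Multiset.count j (↑(pentB k) : Multiset ℕ) := rfl
        omega
      · exact Multiset.notMem_zero _ hj
    rw [invol, dif_neg hnoth]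
    show (franklinM (↑(pentB k)), (0 : Multiset ℕ)) = pairB k
    rw [franklinM, sortD_coe (good_sorted_ge hG), franklin_pentB]
    rfl

lemma psign_pairA (k : ℕ) : psign (pairA k) = (-1)^k := by
  have h1 : Multiset.card (pairA k).1 = k := by
    show Multiset.card (↑(pentA k) : Multiset ℕ) = k
    rw [Multiset.coe_card, pentA_length]
  have h2 : Multiset.card (pairA k).2 = 0 := rfl
  rw [psign, h1, h2, add_zero]

lemma psign_pairB (k : ℕ) : psign (pairB k) = (-1)^k := by
  have h1 : Multiset.card (pairB k).1 = k := by
    show Multiset.card (↑(pentB k) : Multiset ℕ) = k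
    rw [Multiset.coe_card, pentB_length]
  have h2 : Multiset.card (pairB k).2 = 0 := rfl
  rw [psign, h1, h2, add_zero]

lemma pent_inj {a b : ℤ} (h : a * (3*a+1) = b * (3*b+1)) : a = b := by
  have h2 : (a - b) * (3*(a+b) + 1) = 0 := by linear_combination h
  rcases mul_eq_zero.1 h2 with h3 | h3
  · linarith
  · exfalso
    omega



open Multiset

open scoped Classical in
theorem fix_filter_eq {n : ℕ} {m : ℤ} (h2 : 2*(n:ℤ) = m*(3*m+1)) :
    ∃ k : ℕ, k = m.natAbs ∧
      (P n).filter (fun p => invol p = p) = (if 0 ≤ m then {pairB k} else {pairA k}) ∧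
      psign (if 0 ≤ m then pairB k else pairA k) = (-1)^k := by
  rcases le_or_gt 0 m with hm0 | hm0
  · obtain ⟨j, hmj⟩ : ∃ j : ℕ, m = (j:ℤ) := ⟨m.toNat, by omega⟩
    refine ⟨j, by omega, ?_, ?_⟩
    · rw [if_pos hm0]
      have hB : 2*n = 3*(j*j) + j := by
        have hz : (2*(n:ℤ)) = 3*((j:ℤ)*(j:ℤ)) + (j:ℤ) := by rw [h2, hmj]; ring
        exact_mod_cast hz
      apply Finset.ext
      intro p
      simp only [Finset.mem_singleton]
      constructor
      · intro hp
        obtain ⟨hmem, hfix⟩ := Finset.mem_filter.1 hp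
        obtain ⟨k', hk' | hk'⟩ := fix_shape (mem_P.1 hmem) hfix
        · obtain ⟨hpe, hs⟩ := hk'
          have h1 : ((2*n + k' : ℕ) : ℤ) = 3*((k':ℤ)*(k':ℤ)) := by exact_mod_cast hs
          push_cast at h1
          have hz : (-(k':ℤ)) * (3*(-(k':ℤ))+1) = m*(3*m+1) := by
            rw [← h2]; linarith
          have he := pent_inj hz
          have hk'0 : k' = 0 := by omega
          have hj0 : j = 0 := by omega
          subst hk'0
          rw [hpe, pairA_zero, hj0]
        · obtain ⟨hpe, hs⟩ := hk'
          have h1 : ((2*n : ℕ) : ℤ) = 3*((k':ℤ)*(k':ℤ)) + (k':ℤ) := by exact_mod_cast hs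
          have h1b : ((2*n : ℕ) : ℤ) = 3*((j:ℤ)*(j:ℤ)) + (j:ℤ) := by exact_mod_cast hB
          push_cast at h1 h1b
          have hz : ((k':ℤ)) * (3*(k':ℤ)+1) = (j:ℤ)*(3*(j:ℤ)+1) := by
            linear_combination h1b - h1
          have he := pent_inj hz
          have : k' = j := by exact_mod_cast he
          rw [hpe, this]
      · intro hp
        rw [hp]
        obtain ⟨hmem, hfix⟩ := pairB_mem_fix hB
        exact Finset.mem_filter.2 ⟨hmem, hfix⟩
    · rw [if_pos hm0, psign_pairB]
  · obtain ⟨j, hmj⟩ : ∃ j : ℕ, m = -(j:ℤ) := ⟨(-m).toNat, by omega⟩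
    refine ⟨j, by omega, ?_, ?_⟩
    · rw [if_neg (by omega)]
      have hA : 2*n + j = 3*(j*j) := by
        have hz : (2*(n:ℤ)) + (j:ℤ) = 3*((j:ℤ)*(j:ℤ)) := by rw [h2, hmj]; ring
        exact_mod_cast hz
      apply Finset.ext
      intro p
      simp only [Finset.mem_singleton]
      constructor
      · intro hp
        obtain ⟨hmem, hfix⟩ := Finset.mem_filter.1 hp
        obtain ⟨k', hk' | hk'⟩ := fix_shape (mem_P.1 hmem) hfix
        · obtain ⟨hpe, hs⟩ := hk'
          have h1 : ((2*n + k' : ℕ) : ℤ) = 3*((k':ℤ)*(k':ℤ)) := by exact_mod_cast hs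
          push_cast at h1
          have hz : (-(k':ℤ)) * (3*(-(k':ℤ))+1) = m*(3*m+1) := by
            rw [← h2]; linarith
          have he := pent_inj hz
          have : k' = j := by omega
          rw [hpe, this]
        · obtain ⟨hpe, hs⟩ := hk'
          have h1 : ((2*n : ℕ) : ℤ) = 3*((k':ℤ)*(k':ℤ)) + (k':ℤ) := by exact_mod_cast hs
          push_cast at h1
          have hz : ((k':ℤ)) * (3*(k':ℤ)+1) = m*(3*m+1) := by
            rw [← h2]; linarith
          have he := pent_inj hz
          exfalso
          omega
      · intro hp
        rw [hp]
        obtain ⟨hmem, hfix⟩ := pairA_mem_fix hA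
        exact Finset.mem_filter.2 ⟨hmem, hfix⟩
    · rw [if_neg (by omega), psign_pairA]

end Pent

/-- `d^e_2(n) − d^o_2(n)` equals `(−1)^m` if `n = m(3m+1)/2` for some integer
`m`, and `0` otherwise. -/
theorem d2e_sub_d2o (n : ℕ) :
    (∀ m : ℤ, (n : ℤ) = m * (3 * m + 1) / 2 → (d2e n : ℤ) - d2o n = (-1) ^ m.natAbs) ∧
    ((¬ ∃ m : ℤ, (n : ℤ) = m * (3 * m + 1) / 2) → (d2e n : ℤ) - d2o n = 0) := by
  classical
  constructor
  · intro m hm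
    have h2 : 2*(n:ℤ) = m*(3*m+1) := by
      have hdvd : (2:ℤ) ∣ m*(3*m+1) := by
        rcases Int.even_or_odd m with ⟨c, hc⟩ | ⟨c, hc⟩
        · exact ⟨c*(3*m+1), by rw [hc]; ring⟩
        · exact ⟨m*(3*c+2), by rw [hc]; ring⟩
      obtain ⟨d, hd⟩ := hdvd
      rw [hd] at hm ⊢
      rw [Int.mul_ediv_cancel_left _ (by norm_num)] at hm
      rw [hm]
    obtain ⟨k, hkabs, hfilter, hsign⟩ := Pent.fix_filter_eq h2
    rw [Pent.bridge, Pent.sum_P_eq_fix, hfilter]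
    rcases le_or_gt 0 m with hm0 | hm0
    · rw [if_pos hm0] at hsign ⊢
      rw [Finset.sum_singleton, hsign, hkabs]
    · rw [if_neg (by omega)] at hsign ⊢
      rw [Finset.sum_singleton, hsign, hkabs]
  · intro hno
    rw [Pent.bridge, Pent.sum_P_eq_fix]
    have hempty : (Pent.P n).filter (fun p => Pent.invol p = p) = ∅ := by
      apply Finset.eq_empty_of_forall_notMem
      intro p hp
      obtain ⟨hmem, hfix⟩ := Finset.mem_filter.1 hp
      obtain ⟨k, hk | hk⟩ := Pent.fix_shape (Pent.mem_P.1 hmem) hfix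
      · refine hno ⟨-(k:ℤ), ?_⟩
        have h1 : ((2*n + k : ℕ) : ℤ) = 3*((k:ℤ)*(k:ℤ)) := by exact_mod_cast hk.2
        push_cast at h1
        have h2 : (-(k:ℤ)) * (3*(-(k:ℤ))+1) = 2*(n:ℤ) := by linarith
        omega
      · refine hno ⟨(k:ℤ), ?_⟩
        have h1 : ((2*n : ℕ) : ℤ) = 3*((k:ℤ)*(k:ℤ)) + (k:ℤ) := by exact_mod_cast hk.2
        push_cast at h1
        have h2 : ((k:ℤ)) * (3*(k:ℤ)+1) = 2*(n:ℤ) := by linarith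
        omega
    rw [hempty, Finset.sum_empty]
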